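/- For a multiplicative n-Hom Lie superalgebra N, [QDer(N), QC(N)] ⊆ QC(N): if D is a homogeneous α^k-quasiderivation of degree ξ and E a homogeneous α^s-quasicentroid element of degree η, then the supercommutator [D,E] = DE − (−1)^{ξη}ED is an α^{k+s}-quasicentroid element of degree ξ+η. -/

import Mathlib

open scoped BigOperators

noncomputable section

variable {𝔽 : Type*} [Field 𝔽]
variable {N : Type*} [AddCommGroup N] [Module 𝔽 N]

/-- The sign `(-1)^g` for `g : ZMod 2`. -/
def sgn (𝔽 : Type*) [Field 𝔽] (g : ZMod 2) : 𝔽 := if g = 0 then 1 else -1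

/-- `|X_{i-1}|` : the sum of the degrees `d j` for `j < i`. -/
def psum {m : ℕ} (d : Fin m → ZMod 2) (i : Fin m) : ZMod 2 :=
  ∑ j ∈ Finset.univ.filter (fun j => j < i), d j

/-- `D` is homogeneous of degree `ξ` with respect to the `ℤ₂`-grading `gr`. -/
def Homog (gr : ZMod 2 → Submodule 𝔽 N) (ξ : ZMod 2) (D : N →ₗ[𝔽] N) : Prop :=
  ∀ g : ZMod 2, ∀ x ∈ gr g, D x ∈ gr (g + ξ)

/-- `(N, br, α)` is a multiplicative `n`-Hom Lie superalgebra, where `n = m + 1`: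
`N = N₀ ⊕ N₁` is `ℤ₂`-graded, the `n`-multilinear bracket `br` is even (adds degrees),
super skew-symmetric in adjacent arguments, `α` is even, multiplicative, and the super
Hom-Jacobi identity holds. -/
structure IsMNHLS {m : ℕ} (gr : ZMod 2 → Submodule 𝔽 N)
    (br : MultilinearMap 𝔽 (fun _ : Fin (m + 1) => N) N) (α : N →ₗ[𝔽] N) : Prop where
  internal : DirectSum.IsInternal gr
  alpha_even : ∀ g : ZMod 2, ∀ x ∈ gr g, α x ∈ gr g
  br_deg : ∀ (d : Fin (m + 1) → ZMod 2) (x : Fin (m + 1) → N),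
      (∀ i, x i ∈ gr (d i)) → br x ∈ gr (∑ i, d i)
  skew : ∀ (d : Fin (m + 1) → ZMod 2) (x : Fin (m + 1) → N),
      (∀ i, x i ∈ gr (d i)) → ∀ i j : Fin (m + 1), (i : ℕ) + 1 = (j : ℕ) →
      br x = -sgn 𝔽 (d i * d j) • br (x ∘ Equiv.swap i j)
  alpha_br : ∀ x : Fin (m + 1) → N, α (br x) = br fun i => α (x i)
  jacobi : ∀ (dx : Fin m → ZMod 2) (x : Fin m → N)
      (dy : Fin (m + 1) → ZMod 2) (y : Fin (m + 1) → N),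
      (∀ i, x i ∈ gr (dx i)) → (∀ i, y i ∈ gr (dy i)) →
      br (Fin.snoc (fun i => α (x i)) (br y)) =
        ∑ i : Fin (m + 1), sgn 𝔽 ((∑ j, dx j) * psum dy i) •
          br (Function.update (fun j => α (y j)) i (br (Fin.snoc x (y i))))

/-- `D` is a homogeneous `α^k`-derivation of degree `ξ`. -/
def IsDer {m : ℕ} (gr : ZMod 2 → Submodule 𝔽 N)
    (br : MultilinearMap 𝔽 (fun _ : Fin (m + 1) => N) N) (α : N →ₗ[𝔽] N)
    (k : ℕ) (ξ : ZMod 2) (D : N →ₗ[𝔽] N) : Prop :=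
  Homog gr ξ D ∧ D ∘ₗ α = α ∘ₗ D ∧
    ∀ (d : Fin (m + 1) → ZMod 2) (x : Fin (m + 1) → N), (∀ i, x i ∈ gr (d i)) →
      D (br x) = ∑ i : Fin (m + 1), sgn 𝔽 (ξ * psum d i) •
        br (Function.update (fun j => (α ^ k) (x j)) i (D (x i)))

/-- `D` is a homogeneous `α^k`-quasiderivation of degree `ξ` with associated map `D'`. -/
def IsQDerWith {m : ℕ} (gr : ZMod 2 → Submodule 𝔽 N)
    (br : MultilinearMap 𝔽 (fun _ : Fin (m + 1) => N) N) (α : N →ₗ[𝔽] N)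
    (k : ℕ) (ξ : ZMod 2) (D D' : N →ₗ[𝔽] N) : Prop :=
  Homog gr ξ D ∧ D ∘ₗ α = α ∘ₗ D ∧ Homog gr ξ D' ∧ D' ∘ₗ α = α ∘ₗ D' ∧
    ∀ (d : Fin (m + 1) → ZMod 2) (x : Fin (m + 1) → N), (∀ i, x i ∈ gr (d i)) →
      (∑ i : Fin (m + 1), sgn 𝔽 (ξ * psum d i) •
        br (Function.update (fun j => (α ^ k) (x j)) i (D (x i)))) = D' (br x)

/-- `D` is a homogeneous `α^k`-quasiderivation of degree `ξ`. -/
def IsQDer {m : ℕ} (gr : ZMod 2 → Submodule 𝔽 N)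
    (br : MultilinearMap 𝔽 (fun _ : Fin (m + 1) => N) N) (α : N →ₗ[𝔽] N)
    (k : ℕ) (ξ : ZMod 2) (D : N →ₗ[𝔽] N) : Prop :=
  ∃ D' : N →ₗ[𝔽] N, IsQDerWith gr br α k ξ D D'

/-- `D` is a homogeneous generalized `α^k`-derivation of degree `ξ`:
there are `D⁽¹⁾, …, D⁽ⁿ⁾` (here `DD i` for positions `i = 1, …, n-1`, with `DD 0 = D`,
and `Dn = D⁽ⁿ⁾`) all homogeneous of degree `ξ` and commuting with `α`, satisfying the
defining identity. -/
def IsGDer {m : ℕ} (gr : ZMod 2 → Submodule 𝔽 N)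
    (br : MultilinearMap 𝔽 (fun _ : Fin (m + 1) => N) N) (α : N →ₗ[𝔽] N)
    (k : ℕ) (ξ : ZMod 2) (D : N →ₗ[𝔽] N) : Prop :=
  Homog gr ξ D ∧ D ∘ₗ α = α ∘ₗ D ∧
    ∃ (DD : Fin (m + 1) → (N →ₗ[𝔽] N)) (Dn : N →ₗ[𝔽] N),
      DD 0 = D ∧ (∀ i, Homog gr ξ (DD i)) ∧ (∀ i, DD i ∘ₗ α = α ∘ₗ DD i) ∧
      Homog gr ξ Dn ∧ Dn ∘ₗ α = α ∘ₗ Dn ∧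
      ∀ (d : Fin (m + 1) → ZMod 2) (x : Fin (m + 1) → N), (∀ i, x i ∈ gr (d i)) →
        (∑ i : Fin (m + 1), sgn 𝔽 (ξ * psum d i) •
          br (Function.update (fun j => (α ^ k) (x j)) i (DD i (x i)))) = Dn (br x)

/-- `D` is a homogeneous `α^k`-centroid element of degree `ξ`. -/
def IsCent {m : ℕ} (gr : ZMod 2 → Submodule 𝔽 N)
    (br : MultilinearMap 𝔽 (fun _ : Fin (m + 1) => N) N) (α : N →ₗ[𝔽] N)
    (k : ℕ) (ξ : ZMod 2) (D : N →ₗ[𝔽] N) : Prop :=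
  Homog gr ξ D ∧ D ∘ₗ α = α ∘ₗ D ∧
    ∀ (d : Fin (m + 1) → ZMod 2) (x : Fin (m + 1) → N), (∀ i, x i ∈ gr (d i)) →
      (∀ i : Fin (m + 1),
        br (Function.update (fun j => (α ^ k) (x j)) 0 (D (x 0))) =
          sgn 𝔽 (ξ * psum d i) •
            br (Function.update (fun j => (α ^ k) (x j)) i (D (x i)))) ∧
      br (Function.update (fun j => (α ^ k) (x j)) 0 (D (x 0))) = D (br x)

/-- `D` is a homogeneous `α^k`-quasicentroid element of degree `ξ`. -/
def IsQCent {m : ℕ} (gr : ZMod 2 → Submodule 𝔽 N)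
    (br : MultilinearMap 𝔽 (fun _ : Fin (m + 1) => N) N) (α : N →ₗ[𝔽] N)
    (k : ℕ) (ξ : ZMod 2) (D : N →ₗ[𝔽] N) : Prop :=
  Homog gr ξ D ∧ D ∘ₗ α = α ∘ₗ D ∧
    ∀ (d : Fin (m + 1) → ZMod 2) (x : Fin (m + 1) → N), (∀ i, x i ∈ gr (d i)) →
      ∀ i : Fin (m + 1),
        br (Function.update (fun j => (α ^ k) (x j)) 0 (D (x 0))) =
          sgn 𝔽 (ξ * psum d i) •
            br (Function.update (fun j => (α ^ k) (x j)) i (D (x i)))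

/-- `D` is a homogeneous `α^k`-center derivation of degree `ξ`. -/
def IsZDer {m : ℕ} (gr : ZMod 2 → Submodule 𝔽 N)
    (br : MultilinearMap 𝔽 (fun _ : Fin (m + 1) => N) N) (α : N →ₗ[𝔽] N)
    (k : ℕ) (ξ : ZMod 2) (D : N →ₗ[𝔽] N) : Prop :=
  Homog gr ξ D ∧ D ∘ₗ α = α ∘ₗ D ∧
    ∀ (d : Fin (m + 1) → ZMod 2) (x : Fin (m + 1) → N), (∀ i, x i ∈ gr (d i)) →
      br (Function.update (fun j => (α ^ k) (x j)) 0 (D (x 0))) = 0 ∧ D (br x) = 0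

/-- The center `Z(N) = {x : [x, y₂, …, yₙ] = 0}`. -/
def center {m : ℕ} (br : MultilinearMap 𝔽 (fun _ : Fin (m + 1) => N) N) :
    Submodule 𝔽 N where
  carrier := {x | ∀ y : Fin (m + 1) → N, br (Function.update y 0 x) = 0}
  add_mem' := by
    intro a b ha hb y
    rw [MultilinearMap.map_update_add, ha y, hb y, add_zero]
  zero_mem' := by
    intro y
    exact br.map_update_zero y 0
  smul_mem' := by
    intro c a ha y
    rw [MultilinearMap.map_update_smul, ha y, smul_zero]

/-- The Jordan product `D • E = ½(DE + (-1)^{|D||E|} ED)` of operators of degrees `ξ, η`. -/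
def jprod (𝔽 : Type*) [Field 𝔽] {N : Type*} [AddCommGroup N] [Module 𝔽 N]
    (ξ η : ZMod 2) (D E : N →ₗ[𝔽] N) : N →ₗ[𝔽] N :=
  (2 : 𝔽)⁻¹ • (D ∘ₗ E + sgn 𝔽 (ξ * η) • (E ∘ₗ D))

/-- The Hom-associator of the Jordan product with respect to `α̃(u) = α ∘ u`, where
`x, y, z` have degrees `a, b, c`. -/
def jassoc (𝔽 : Type*) [Field 𝔽] {N : Type*} [AddCommGroup N] [Module 𝔽 N]
    (α : N →ₗ[𝔽] N) (a b c : ZMod 2) (x y z : N →ₗ[𝔽] N) : N →ₗ[𝔽] N :=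
  jprod 𝔽 (a + b) c (jprod 𝔽 a b x y) (α ∘ₗ z) -
    jprod 𝔽 a (b + c) (α ∘ₗ x) (jprod 𝔽 b c y z)

/-- The bracket subalgebra `[N, …, N]`, the span of all brackets. -/
def brSub {m : ℕ} (br : MultilinearMap 𝔽 (fun _ : Fin (m + 1) => N) N) :
    Submodule 𝔽 N :=
  Submodule.span 𝔽 (Set.range fun x : Fin (m + 1) → N => br x)

/-- The bracket of `Ň = Nt + Ntⁿ` (modelled as `N × N`, first coordinate the coefficient
of `t`, second the coefficient of `tⁿ`): `[x₁t, …, xₙt] = [x₁, …, xₙ]tⁿ` and every bracket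
involving a `tⁿ`-term vanishes. -/
def checkBr {m : ℕ} (br : MultilinearMap 𝔽 (fun _ : Fin (m + 1) => N) N) :
    MultilinearMap 𝔽 (fun _ : Fin (m + 1) => N × N) (N × N) :=
  (LinearMap.inr 𝔽 N N).compMultilinearMap
    (br.compLinearMap fun _ => LinearMap.fst 𝔽 N N)

/-- The grading of `Ň = Nt + Ntⁿ`. -/
def checkGr (gr : ZMod 2 → Submodule 𝔽 N) (g : ZMod 2) : Submodule 𝔽 (N × N) :=
  (gr g).prod (gr g)

/-- The map `φ(D) : Ň → Ň`, `φ(D)(at + utⁿ + btⁿ) = D(a)t + D'(b)tⁿ`, where `π` is the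
projection of `N` onto `[N, …, N]` along `U`. -/
def phiMap (D D' π : N →ₗ[𝔽] N) : N × N →ₗ[𝔽] N × N :=
  LinearMap.prodMap D (D' ∘ₗ π)


section Helpers

variable {𝔽 : Type*} [Field 𝔽]

lemma sgn_zero' : sgn 𝔽 0 = 1 := if_pos rfl

lemma sgn_add' (a b : ZMod 2) : sgn 𝔽 (a + b) = sgn 𝔽 a * sgn 𝔽 b := by
  have h2 : (1 + 1 : ZMod 2) = 0 := by decide
  have h1 : (1 : ZMod 2) ≠ 0 := by decide
  have h01 : ∀ x : ZMod 2, x = 0 ∨ x = 1 := by decide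
  rcases h01 a with rfl | rfl <;> rcases h01 b with rfl | rfl <;> simp [sgn, h2, h1]

lemma sgn_sq' (g : ZMod 2) : sgn 𝔽 g * sgn 𝔽 g = 1 := by
  rw [← sgn_add']
  have : g + g = 0 := by revert g; decide
  rw [this, sgn_zero']

lemma psum_zero' {m : ℕ} (d : Fin (m + 1) → ZMod 2) : psum d 0 = 0 := by
  unfold psum
  refine Finset.sum_eq_zero fun j hj => ?_
  simp only [Finset.mem_filter] at hj
  exact absurd hj.2 (Fin.not_lt_zero j)

lemma psum_update' {m : ℕ} (d : Fin (m + 1) → ZMod 2) (j : Fin (m + 1)) (c : ZMod 2)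
    (i : Fin (m + 1)) :
    psum (Function.update d j c) i = psum d i + (if j < i then c - d j else 0) := by
  unfold psum
  by_cases hj : j < i
  · have hjS : j ∈ Finset.univ.filter (fun l => l < i) := by simp [hj]
    rw [Finset.sum_update_of_mem hjS, if_pos hj, Finset.sdiff_singleton_eq_erase,
      Finset.sum_erase_eq_sub hjS]
    ring
  · have hjS : j ∉ Finset.univ.filter (fun l => l < i) := by simp [hj]
    rw [Finset.sum_update_of_notMem hjS, if_neg hj, add_zero]

end Helpers

/-- Proposition 3.2(2): `[QDer(N), QC(N)] ⊆ QC(N)`. -/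
theorem qder_bracket_qcent {𝔽 : Type*} [Field 𝔽] [CharZero 𝔽]
    {N : Type*} [AddCommGroup N] [Module 𝔽 N] {m : ℕ} (hm : 1 ≤ m)
    (gr : ZMod 2 → Submodule 𝔽 N) (br : MultilinearMap 𝔽 (fun _ : Fin (m + 1) => N) N)
    (α : N →ₗ[𝔽] N) (H : IsMNHLS gr br α)
    (k s : ℕ) (ξ η : ZMod 2) (D E : N →ₗ[𝔽] N)
    (hD : IsQDer gr br α k ξ D) (hE : IsQCent gr br α s η E) :
    IsQCent gr br α (k + s) (ξ + η) (D ∘ₗ E - sgn 𝔽 (ξ * η) • (E ∘ₗ D)) := by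
  obtain ⟨D', hDhom, hDα, hD'hom, hD'α, hDid⟩ := hD
  obtain ⟨hEhom, hEα, hEid⟩ := hE
  have hDa : ∀ z, D (α z) = α (D z) := fun z => LinearMap.congr_fun hDα z
  have hEa : ∀ z, E (α z) = α (E z) := fun z => LinearMap.congr_fun hEα z
  have hDpow : ∀ (t : ℕ) (z : N), D ((α ^ t) z) = (α ^ t) (D z) := by
    intro t
    induction t with
    | zero => intro z; simp
    | succ n ih =>
        intro z
        rw [pow_succ, Module.End.mul_apply, Module.End.mul_apply, ih, hDa]
  have hEpow : ∀ (t : ℕ) (z : N), E ((α ^ t) z) = (α ^ t) (E z) := by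
    intro t
    induction t with
    | zero => intro z; simp
    | succ n ih =>
        intro z
        rw [pow_succ, Module.End.mul_apply, Module.End.mul_apply, ih, hEa]
  have hks : ∀ z : N, (α ^ k) ((α ^ s) z) = (α ^ (k + s)) z := fun z => by
    rw [pow_add, Module.End.mul_apply]
  have hsk : ∀ z : N, (α ^ s) ((α ^ k) z) = (α ^ (k + s)) z := fun z => by
    rw [add_comm k s, pow_add, Module.End.mul_apply]
  have hpowmem : ∀ (t : ℕ) (g : ZMod 2) (z : N), z ∈ gr g → (α ^ t) z ∈ gr g := by
    intro t
    induction t with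
    | zero => intro g z hz; simpa using hz
    | succ n ih =>
        intro g z hz
        rw [pow_succ, Module.End.mul_apply]
        exact ih g (α z) (H.alpha_even g z hz)
  refine ⟨?_, ?_, ?_⟩
  · intro g z hz
    have h1 : D (E z) ∈ gr (g + (ξ + η)) := by
      have h := hDhom (g + η) (E z) (hEhom g z hz)
      have e : g + η + ξ = g + (ξ + η) := by ring
      rwa [e] at h
    have h2 : E (D z) ∈ gr (g + (ξ + η)) := by
      have h := hEhom (g + ξ) (D z) (hDhom g z hz)
      have e : g + ξ + η = g + (ξ + η) := by ring
      rwa [e] at h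
    have e2 : (D ∘ₗ E - sgn 𝔽 (ξ * η) • (E ∘ₗ D)) z
        = D (E z) - sgn 𝔽 (ξ * η) • E (D z) := by
      simp [LinearMap.sub_apply, LinearMap.smul_apply, LinearMap.comp_apply]
    rw [e2]
    exact sub_mem h1 (Submodule.smul_mem _ _ h2)
  · ext z
    simp [LinearMap.sub_apply, LinearMap.smul_apply, LinearMap.comp_apply,
      map_sub, map_smul, hDa, hEa]
  · intro d x hx i
    have hFapp : ∀ z, (D ∘ₗ E - sgn 𝔽 (ξ * η) • (E ∘ₗ D)) z
        = D (E z) - sgn 𝔽 (ξ * η) • E (D z) := by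
      intro z
      simp [LinearMap.sub_apply, LinearMap.smul_apply, LinearMap.comp_apply]
    rcases eq_or_ne i 0 with rfl | hi0
    · rw [psum_zero' d, mul_zero, sgn_zero', one_smul]
    · have h0i : (0 : Fin (m + 1)) < i := Fin.pos_of_ne_zero hi0
      have hgE : ∀ (j l : Fin (m + 1)),
          Function.update (fun l' => (α ^ s) (x l')) j (E (x j)) l
            ∈ gr (Function.update d j (d j + η) l) := by
        intro j l
        rcases eq_or_ne l j with rfl | hlj
        · rw [Function.update_self, Function.update_self]
          exact hEhom (d l) (x l) (hx l)
        · rw [Function.update_of_ne hlj, Function.update_of_ne hlj]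
          exact hpowmem s (d l) (x l) (hx l)
      have hgD : ∀ (j l : Fin (m + 1)),
          Function.update (fun l' => (α ^ k) (x l')) j (D (x j)) l
            ∈ gr (Function.update d j (d j + ξ) l) := by
        intro j l
        rcases eq_or_ne l j with rfl | hlj
        · rw [Function.update_self, Function.update_self]
          exact hDhom (d l) (x l) (hx l)
        · rw [Function.update_of_ne hlj, Function.update_of_ne hlj]
          exact hpowmem k (d l) (x l) (hx l)
      have hpz : ∀ j : Fin (m + 1),
          psum (Function.update d j (d j + ξ)) i
            = psum d i + (if j < i then ξ else 0) := by
        intro j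
        rw [psum_update']
        congr 1
        split_ifs with h
        · rw [add_sub_cancel_left]
        · rfl
      have hpyj : ∀ j : Fin (m + 1), j ≠ 0 →
          psum (Function.update d 0 (d 0 + η)) j = psum d j + η := by
        intro j hj
        rw [psum_update', if_pos (Fin.pos_of_ne_zero hj), add_sub_cancel_left]
      have hpwj : ∀ j : Fin (m + 1),
          psum (Function.update d i (d i + η)) j
            = psum d j + (if i < j then η else 0) := by
        intro j
        rw [psum_update']
        congr 1
        split_ifs with h
        · rw [add_sub_cancel_left]
        · rfl
      have keySame : ∀ j : Fin (m + 1),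
          Function.update (fun l => (α ^ k)
              (Function.update (fun l' => (α ^ s) (x l')) j (E (x j)) l)) j
            (D (Function.update (fun l' => (α ^ s) (x l')) j (E (x j)) j))
          = Function.update (fun l => (α ^ (k + s)) (x l)) j (D (E (x j))) := by
        intro j
        funext l
        rcases eq_or_ne l j with rfl | hlj
        · simp only [Function.update_self]
        · simp only [Function.update_of_ne hlj]
          exact hks _
      have keyA : ∀ j : Fin (m + 1), j ≠ 0 →
          Function.update (fun l => (α ^ k)
              (Function.update (fun l' => (α ^ s) (x l')) 0 (E (x 0)) l)) j
            (D (Function.update (fun l' => (α ^ s) (x l')) 0 (E (x 0)) j))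
          = Function.update (fun l => (α ^ s)
              (Function.update (fun l' => (α ^ k) (x l')) j (D (x j)) l)) 0
            (E (Function.update (fun l' => (α ^ k) (x l')) j (D (x j)) 0)) := by
        intro j hj0
        funext l
        rcases eq_or_ne l j with rfl | hlj
        · simp only [Function.update_self, Function.update_of_ne hj0]
          exact hDpow s _
        · rcases eq_or_ne l 0 with rfl | hl0
          · simp only [Function.update_self, Function.update_of_ne (Ne.symm hj0)]
            exact (hEpow k _).symm
          · simp only [Function.update_of_ne hlj, Function.update_of_ne hl0]
            rw [hks, hsk]
      have keyB : ∀ j : Fin (m + 1), j ≠ i →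
          Function.update (fun l => (α ^ k)
              (Function.update (fun l' => (α ^ s) (x l')) i (E (x i)) l)) j
            (D (Function.update (fun l' => (α ^ s) (x l')) i (E (x i)) j))
          = Function.update (fun l => (α ^ s)
              (Function.update (fun l' => (α ^ k) (x l')) j (D (x j)) l)) i
            (E (Function.update (fun l' => (α ^ k) (x l')) j (D (x j)) i)) := by
        intro j hji
        funext l
        rcases eq_or_ne l j with rfl | hlj
        · simp only [Function.update_self, Function.update_of_ne hji]
          exact hDpow s _
        · rcases eq_or_ne l i with rfl | hli
          · simp only [Function.update_self, Function.update_of_ne (Ne.symm hji)]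
            exact (hEpow k _).symm
          · simp only [Function.update_of_ne hlj, Function.update_of_ne hli]
            rw [hks, hsk]
      have keyC : ∀ j : Fin (m + 1),
          Function.update (fun l => (α ^ s)
              (Function.update (fun l' => (α ^ k) (x l')) j (D (x j)) l)) j
            (E (Function.update (fun l' => (α ^ k) (x l')) j (D (x j)) j))
          = Function.update (fun l => (α ^ (k + s)) (x l)) j (E (D (x j))) := by
        intro j
        funext l
        rcases eq_or_ne l j with rfl | hlj
        · simp only [Function.update_self]
        · simp only [Function.update_of_ne hlj]
          exact hsk _
      have hQCz : ∀ j : Fin (m + 1),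
          br (Function.update (fun l => (α ^ s)
              (Function.update (fun l' => (α ^ k) (x l')) j (D (x j)) l)) 0
              (E (Function.update (fun l' => (α ^ k) (x l')) j (D (x j)) 0)))
            = sgn 𝔽 (η * (psum d i + if j < i then ξ else 0)) •
              br (Function.update (fun l => (α ^ s)
                (Function.update (fun l' => (α ^ k) (x l')) j (D (x j)) l)) i
                (E (Function.update (fun l' => (α ^ k) (x l')) j (D (x j)) i))) := by
        intro j
        have h := hEid (Function.update d j (d j + ξ))
          (Function.update (fun l' => (α ^ k) (x l')) j (D (x j))) (hgD j) i
        rwa [hpz j] at h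
      have hsplit : ∀ f : Fin (m + 1) → N, (∑ j, f j)
          = f 0 + (f i + ∑ j ∈ (Finset.univ.erase 0).erase i, f j) := by
        intro f
        rw [Finset.add_sum_erase _ f (Finset.mem_erase.mpr ⟨hi0, Finset.mem_univ i⟩),
          Finset.add_sum_erase _ f (Finset.mem_univ 0)]
      have hB0 : br (Function.update (fun l => (α ^ k)
              (Function.update (fun l' => (α ^ s) (x l')) i (E (x i)) l)) 0
            (D (Function.update (fun l' => (α ^ s) (x l')) i (E (x i)) 0)))
          = sgn 𝔽 (η * (psum d i + ξ)) •
            br (Function.update (fun l => (α ^ (k + s)) (x l)) 0 (E (D (x 0)))) := by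
        have h := hQCz 0
        rw [keyC 0, if_pos h0i] at h
        rw [keyB 0 (Ne.symm hi0), h, smul_smul, sgn_sq', one_smul]
      have hAB := hDid (Function.update d 0 (d 0 + η))
        (Function.update (fun l' => (α ^ s) (x l')) 0 (E (x 0))) (hgE 0)
      rw [hEid d x hx i, map_smul,
        ← hDid (Function.update d i (d i + η))
          (Function.update (fun l' => (α ^ s) (x l')) i (E (x i))) (hgE i)] at hAB
      rw [hsplit, hsplit] at hAB
      beta_reduce at hAB
      simp only [psum_zero', mul_zero, sgn_zero', one_smul] at hAB
      rw [keySame 0, hpyj i hi0, keyA i hi0, hQCz i, if_neg (lt_irrefl i), add_zero,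
        keyC i, smul_smul] at hAB
      rw [hpwj i, if_neg (lt_irrefl i), add_zero, keySame i, hB0] at hAB
      rw [smul_add, smul_add, smul_smul, smul_smul] at hAB
      have c1 : ∀ a b u v : ZMod 2, u * (a + v) + v * (b + u) = v * b + u * (a + 0) := by
        decide
      have c2 : ∀ a b u v : ZMod 2, u * (a + v) + v * (b + 0) = v * b + u * (a + v) := by
        decide
      have hS : (∑ j ∈ (Finset.univ.erase 0).erase i,
            sgn 𝔽 (ξ * psum (Function.update d 0 (d 0 + η)) j) •
              br (Function.update (fun l => (α ^ k)
                  (Function.update (fun l' => (α ^ s) (x l')) 0 (E (x 0)) l)) j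
                (D (Function.update (fun l' => (α ^ s) (x l')) 0 (E (x 0)) j))))
          = sgn 𝔽 (η * psum d i) • ∑ j ∈ (Finset.univ.erase 0).erase i,
              sgn 𝔽 (ξ * psum (Function.update d i (d i + η)) j) •
                br (Function.update (fun l => (α ^ k)
                    (Function.update (fun l' => (α ^ s) (x l')) i (E (x i)) l)) j
                  (D (Function.update (fun l' => (α ^ s) (x l')) i (E (x i)) j))) := by
        rw [Finset.smul_sum]
        refine Finset.sum_congr rfl ?_
        intro j hj
        rw [Finset.mem_erase, Finset.mem_erase] at hj
        have hji := hj.1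
        have hj0 := hj.2.1
        rw [hpyj j hj0, keyA j hj0, hQCz j, keyB j hji, hpwj j, smul_smul, smul_smul]
        congr 1
        rw [← sgn_add', ← sgn_add']
        congr 1
        rcases lt_or_gt_of_ne hji with h | h
        · rw [if_pos h, if_neg (asymm h)]
          exact c1 (psum d j) (psum d i) ξ η
        · rw [if_neg (asymm h), if_pos h]
          exact c2 (psum d j) (psum d i) ξ η
      rw [← hS] at hAB
      rw [← add_assoc, ← add_assoc] at hAB
      have hmain := add_right_cancel hAB
      have ecA : sgn 𝔽 (ξ * (psum d i + η)) * sgn 𝔽 (η * psum d i)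
          = sgn 𝔽 ((ξ + η) * psum d i) * sgn 𝔽 (ξ * η) := by
        rw [← sgn_add', ← sgn_add']
        congr 1
        ring
      have ec2 : sgn 𝔽 (η * psum d i) * sgn 𝔽 (η * (psum d i + ξ)) = sgn 𝔽 (ξ * η) := by
        rw [← sgn_add']
        congr 1
        have : ∀ p a b : ZMod 2, b * p + b * (p + a) = a * b := by decide
        exact this (psum d i) ξ η
      have ec3 : sgn 𝔽 (η * psum d i) * sgn 𝔽 (ξ * psum d i)
          = sgn 𝔽 ((ξ + η) * psum d i) := by
        rw [← sgn_add']
        congr 1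
        ring
      rw [ecA, ec2, ec3] at hmain
      rw [hFapp (x 0), hFapp (x i), MultilinearMap.map_update_sub,
        MultilinearMap.map_update_sub, MultilinearMap.map_update_smul,
        MultilinearMap.map_update_smul, smul_sub, smul_smul]
      rw [eq_sub_of_add_eq hmain]
      abel
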